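/- Let k : ℝ⁴ → ℝ be any smooth function and let {f,g} be the Lefschetz-singularity bracket {f,g} = k·((x₃²+x₄²)(∂₁f·∂₂g − ∂₂f·∂₁g) + (x₂x₃−x₁x₄)(∂₁f·∂₃g − ∂₃f·∂₁g) − (x₂x₄+x₁x₃)(∂₁f·∂₄g − ∂₄f·∂₁g) + (x₁x₃+x₂x₄)(∂₂f·∂₃g − ∂₃f·∂₂g) + (x₂x₃−x₁x₄)(∂₂f·∂₄g − ∂₄f·∂₂g) + (x₁²+x₂²)(∂₃f·∂₄g − ∂₄f·∂₃g)). Then the functions P¹ = x₁² − x₂² + x₃² − x₄² and P² = 2(x₁x₂ + x₃x₄) are Casimirs: {P¹, g} = 0 and {P², g} = 0 for every smooth g : ℝ⁴ → ℝ. -/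

import Mathlib

/-- Partial derivative of `f : ℝ⁴ → ℝ` in the `i`-th coordinate direction;
indices `0,1,2,3` correspond to the coordinates x₁,x₂,x₃,x₄. -/
noncomputable def pd (i : Fin 4) (f : (Fin 4 → ℝ) → ℝ) (x : Fin 4 → ℝ) : ℝ :=
  fderiv ℝ f x (Pi.single i 1)

lemma hproj (x : Fin 4 → ℝ) (j : Fin 4) :
    HasFDerivAt (fun y : Fin 4 → ℝ => y j)
      (ContinuousLinearMap.proj j : (Fin 4 → ℝ) →L[ℝ] ℝ) x :=
  (ContinuousLinearMap.proj j : (Fin 4 → ℝ) →L[ℝ] ℝ).hasFDerivAt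

lemma pd_P1 (i : Fin 4) (x : Fin 4 → ℝ) :
    pd i (fun y => (y 0) ^ 2 - (y 1) ^ 2 + (y 2) ^ 2 - (y 3) ^ 2) x =
      2 * x 0 * (Pi.single i 1 : Fin 4 → ℝ) 0 - 2 * x 1 * (Pi.single i 1 : Fin 4 → ℝ) 1
      + 2 * x 2 * (Pi.single i 1 : Fin 4 → ℝ) 2 - 2 * x 3 * (Pi.single i 1 : Fin 4 → ℝ) 3 := by
  have hf : (fun y : Fin 4 → ℝ => (y 0) ^ 2 - (y 1) ^ 2 + (y 2) ^ 2 - (y 3) ^ 2)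
      = fun y => y 0 * y 0 - y 1 * y 1 + y 2 * y 2 - y 3 * y 3 := by
    funext y; ring
  have h := ((((hproj x 0).mul (hproj x 0)).sub ((hproj x 1).mul (hproj x 1))).add
    ((hproj x 2).mul (hproj x 2))).sub ((hproj x 3).mul (hproj x 3))
  simp only [pd, hf, HasFDerivAt.fderiv (f := fun y : Fin 4 → ℝ => y 0 * y 0 - y 1 * y 1 + y 2 * y 2 - y 3 * y 3) h]
  simp
  ring

lemma pd_P2 (i : Fin 4) (x : Fin 4 → ℝ) :
    pd i (fun y => 2 * (y 0 * y 1 + y 2 * y 3)) x =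
      2 * (x 1 * (Pi.single i 1 : Fin 4 → ℝ) 0 + x 0 * (Pi.single i 1 : Fin 4 → ℝ) 1
        + x 3 * (Pi.single i 1 : Fin 4 → ℝ) 2 + x 2 * (Pi.single i 1 : Fin 4 → ℝ) 3) := by
  have h := (((hproj x 0).mul (hproj x 1)).add ((hproj x 2).mul (hproj x 3))).const_mul (2:ℝ)
  simp only [pd, HasFDerivAt.fderiv (f := fun y : Fin 4 → ℝ => 2 * (y 0 * y 1 + y 2 * y 3)) h]
  simp
  ring

/-- The Lefschetz-singularity bracket with conformal factor `k`. -/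
noncomputable def lefBracket (k : (Fin 4 → ℝ) → ℝ)
    (f g : (Fin 4 → ℝ) → ℝ) : (Fin 4 → ℝ) → ℝ :=
  fun x =>
    k x * (((x 2) ^ 2 + (x 3) ^ 2) * (pd 0 f x * pd 1 g x - pd 1 f x * pd 0 g x)
      + (x 1 * x 2 - x 0 * x 3) * (pd 0 f x * pd 2 g x - pd 2 f x * pd 0 g x)
      - (x 1 * x 3 + x 0 * x 2) * (pd 0 f x * pd 3 g x - pd 3 f x * pd 0 g x)
      + (x 0 * x 2 + x 1 * x 3) * (pd 1 f x * pd 2 g x - pd 2 f x * pd 1 g x)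
      + (x 1 * x 2 - x 0 * x 3) * (pd 1 f x * pd 3 g x - pd 3 f x * pd 1 g x)
      + ((x 0) ^ 2 + (x 1) ^ 2) * (pd 2 f x * pd 3 g x - pd 3 f x * pd 2 g x))

/-- `P¹ = x₁² − x₂² + x₃² − x₄²` and `P² = 2(x₁x₂ + x₃x₄)` are Casimir
functions of the Lefschetz-singularity bracket. -/
theorem lefBracket_casimirs (k : (Fin 4 → ℝ) → ℝ) (hk : ContDiff ℝ (⊤ : ℕ∞) k)
    (g : (Fin 4 → ℝ) → ℝ) (hg : ContDiff ℝ (⊤ : ℕ∞) g) (x : Fin 4 → ℝ) :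
    lefBracket k (fun y => (y 0) ^ 2 - (y 1) ^ 2 + (y 2) ^ 2 - (y 3) ^ 2) g x = 0
    ∧ lefBracket k (fun y => 2 * (y 0 * y 1 + y 2 * y 3)) g x = 0 := by
  constructor <;>
  · simp only [lefBracket, pd_P1, pd_P2]
    apply mul_eq_zero_of_right
    simp (config := { decide := true }) [Pi.single_apply]
    ring
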